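/- Let $G$ be an arbitrary group and $V$ a finite-dimensional vector space over a field $\mathbb{K}$. Every bijective linear cellular automaton $\tau \colon V^G \to V^G$ is reversible. -/

import Mathlib

open Module

private noncomputable def seqAux {A : ℕ → Type*} (S : ∀ k, A k → Prop) (f : ∀ k, A (k+1) → A k)
    (h0 : ∃ a, S 0 a) (hstep : ∀ k a, S k a → ∃ b, S (k+1) b ∧ f k b = a) :
    ∀ k, {a : A k // S k a}
  | 0 => ⟨h0.choose, h0.choose_spec⟩
  | (k+1) =>
      ⟨(hstep k (seqAux S f h0 hstep k).1 (seqAux S f h0 hstep k).2).choose,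
       (hstep k (seqAux S f h0 hstep k).1 (seqAux S f h0 hstep k).2).choose_spec.1⟩

private lemma seqAux_compat {A : ℕ → Type*} (S : ∀ k, A k → Prop) (f : ∀ k, A (k+1) → A k)
    (h0 : ∃ a, S 0 a) (hstep : ∀ k a, S k a → ∃ b, S (k+1) b ∧ f k b = a) (k : ℕ) :
    f k (seqAux S f h0 hstep (k+1)).1 = (seqAux S f h0 hstep k).1 :=
  (hstep k (seqAux S f h0 hstep k).1 (seqAux S f h0 hstep k).2).choose_spec.2

set_option synthInstance.maxHeartbeats 1000000 in
set_option maxHeartbeats 1000000 in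
private lemma key_lemma {G : Type*} [Group G] {K V : Type*} [Field K]
    [AddCommGroup V] [Module K V] [FiniteDimensional K V]
    (τ : (G → V) → (G → V)) (hlin : IsLinearMap K τ)
    (M : Finset G) (μ : (M → V) → V)
    (hμ : ∀ (x : G → V) (g : G), τ x g = μ (fun m => x (g * m.val)))
    (hinj : Function.Injective τ) :
    ∃ N₀ : Finset G, ∀ x : G → V, (∀ n ∈ N₀, τ x n = 0) → x 1 = 0 := by
  classical
  set T : (G → V) →ₗ[K] (G → V) := IsLinearMap.mk' τ hlin with hTdef
  have hTa : ∀ x, T x = τ x := fun x => rfl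
  set KerN : Finset G → Submodule K (G → V) :=
    fun N => ⨅ n ∈ N, LinearMap.ker ((LinearMap.proj n).comp T) with hKerNdef
  have hKerN_mem : ∀ (N : Finset G) (x : G → V), x ∈ KerN N ↔ ∀ n ∈ N, τ x n = 0 := by
    intro N x
    simp only [hKerNdef, Submodule.mem_iInf, LinearMap.mem_ker, LinearMap.comp_apply,
      LinearMap.proj_apply]
    exact Iff.rfl
  set Ksub : Finset G → Submodule K V :=
    fun N => (KerN N).map (LinearMap.proj (1 : G)) with hKsubdef
  have hK_anti : ∀ {N N' : Finset G}, N ⊆ N' → Ksub N' ≤ Ksub N := by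
    intro N N' h
    apply Submodule.map_mono
    intro x hx
    rw [hKerN_mem] at hx ⊢
    exact fun n hn => hx n (h hn)
  obtain ⟨N₀, hN₀min⟩ : ∃ N₀ : Finset G, ∀ N : Finset G, Ksub N₀ ≤ Ksub N := by
    set r : Finset G → ℕ := fun N => finrank K (Ksub N) with hrdef
    have hne : (Set.range r).Nonempty := ⟨r ∅, ⟨∅, rfl⟩⟩
    obtain ⟨N₀, hN₀⟩ := Nat.sInf_mem hne
    refine ⟨N₀, fun N => ?_⟩
    have h1 : Ksub (N₀ ∪ N) ≤ Ksub N₀ := hK_anti Finset.subset_union_left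
    have h2 : r N₀ ≤ r (N₀ ∪ N) := by
      rw [hN₀]; exact Nat.sInf_le ⟨N₀ ∪ N, rfl⟩
    have heq : Ksub (N₀ ∪ N) = Ksub N₀ := Submodule.eq_of_le_of_finrank_le h1 h2
    rw [← heq]
    exact hK_anti Finset.subset_union_right
  refine ⟨N₀, fun x hx => ?_⟩
  have hmem : x 1 ∈ Ksub N₀ := ⟨x, (hKerN_mem _ _).mpr hx, rfl⟩
  suffices hbot : ∀ v : V, v ∈ Ksub N₀ → v = 0 from hbot _ hmem
  intro v hv
  have hvall : ∀ N : Finset G, ∃ x : G → V, (∀ n ∈ N, τ x n = 0) ∧ x 1 = v := by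
    intro N
    obtain ⟨x₀, hx₀, hx₀1⟩ := hN₀min N hv
    exact ⟨x₀, (hKerN_mem _ _).mp hx₀, hx₀1⟩
  -- countable subgroup generated by the memory set
  set H : Subgroup G := Subgroup.closure (M : Set G) with hHdef
  have hMH : ∀ m ∈ M, m ∈ H := fun m hm => Subgroup.subset_closure hm
  set M' : Finset G := M ∪ M.image (·⁻¹) with hM'def
  have hM'H : ∀ g ∈ M', g ∈ H := by
    intro g hg
    rw [hM'def, Finset.mem_union] at hg
    rcases hg with hg | hg
    · exact hMH g hg
    · obtain ⟨m, hm, rfl⟩ := Finset.mem_image.mp hg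
      exact inv_mem (hMH m hm)
  have hM'inv : ∀ g ∈ M', g⁻¹ ∈ M' := by
    intro g hg
    rw [hM'def, Finset.mem_union] at hg ⊢
    rcases hg with hg | hg
    · exact Or.inr (Finset.mem_image.mpr ⟨g, hg, rfl⟩)
    · obtain ⟨m, hm, rfl⟩ := Finset.mem_image.mp hg
      exact Or.inl (by simpa using hm)
  set φ : List M' → G := fun l => (l.map Subtype.val).prod with hφdef
  have hφH : ∀ l, φ l ∈ H := by
    intro l
    refine Subgroup.list_prod_mem _ (fun g hg => ?_)
    obtain ⟨m, _, rfl⟩ := List.mem_map.mp hg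
    exact hM'H m.1 m.2
  have hHφ : ∀ g ∈ H, ∃ l : List M', φ l = g := by
    intro g hg
    induction hg using Subgroup.closure_induction with
    | mem y hy => exact ⟨[⟨y, Finset.mem_union_left _ hy⟩], by simp [hφdef]⟩
    | one => exact ⟨[], by simp [hφdef]⟩
    | mul a b _ _ iha ihb =>
      obtain ⟨l₁, h₁⟩ := iha
      obtain ⟨l₂, h₂⟩ := ihb
      exact ⟨l₁ ++ l₂, by simp [hφdef, ← h₁, ← h₂]⟩
    | inv a _ iha =>
      obtain ⟨l, hl⟩ := iha
      refine ⟨(l.map (fun s => (⟨s.1⁻¹, hM'inv s.1 s.2⟩ : M'))).reverse, ?_⟩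
      rw [hφdef, ← hl, hφdef]
      simp only [List.map_reverse, List.map_map]
      rw [List.prod_inv_reverse]
      simp [List.map_map, Function.comp]
  obtain ⟨e0, he0⟩ := exists_surjective_nat (List M')
  set e : ℕ → G := φ ∘ e0 with hedef
  have heH : ∀ i, e i ∈ H := fun i => hφH (e0 i)
  have hecover : ∀ g ∈ H, ∃ i, e i = g := by
    intro g hg
    obtain ⟨l, hl⟩ := hHφ g hg
    obtain ⟨i, rfl⟩ := he0 l
    exact ⟨i, hl⟩
  set E : ℕ → Finset G := fun k => (Finset.range k).image e with hEdef
  have hE_mono : Monotone E := by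
    intro k k' h
    exact Finset.image_subset_image (Finset.range_subset_range.mpr h)
  have hE_H : ∀ (k : ℕ) (g : G), g ∈ E k → g ∈ H := by
    intro k g hg
    obtain ⟨i, _, rfl⟩ := Finset.mem_image.mp hg
    exact heH i
  have hE_cover : ∀ g : G, g ∈ H → ∃ k, g ∈ E k := by
    intro g hg
    obtain ⟨i, rfl⟩ := hecover g hg
    exact ⟨i + 1, Finset.mem_image.mpr ⟨i, Finset.self_mem_range_succ i, rfl⟩⟩
  have hE_finset : ∀ S : Finset G, (∀ s ∈ S, s ∈ H) → ∃ k, S ⊆ E k := by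
    intro S
    induction S using Finset.induction_on with
    | empty => exact fun _ => ⟨0, by simp⟩
    | @insert a S' ha ih =>
      intro hS
      obtain ⟨k₁, hk₁⟩ := ih (fun s hs => hS s (Finset.mem_insert_of_mem hs))
      obtain ⟨k₂, hk₂⟩ := hE_cover _ (hS _ (Finset.mem_insert_self _ _))
      refine ⟨max k₁ k₂, fun s hs => ?_⟩
      rcases Finset.mem_insert.mp hs with rfl | hs
      · exact hE_mono (le_max_right _ _) hk₂
      · exact hE_mono (le_max_left _ _) (hk₁ hs)
  -- homogenized constraint submodules
  set Zf : ((G → V) × K) →ₗ[K] V :=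
    ((LinearMap.proj (1 : G)).comp (LinearMap.fst K (G → V) K)) -
      (LinearMap.snd K (G → V) K).smulRight v with hZfdef
  set Zhat : ℕ → Submodule K ((G → V) × K) := fun j =>
    (⨅ (g : G) (_ : g ∉ H), LinearMap.ker ((LinearMap.proj g).comp (LinearMap.fst K (G → V) K))) ⊓
    (⨅ n ∈ E j, LinearMap.ker ((LinearMap.proj n).comp (T.comp (LinearMap.fst K (G → V) K)))) ⊓
    LinearMap.ker Zf with hZhatdef
  have hZmem : ∀ (j : ℕ) (p : (G → V) × K), p ∈ Zhat j ↔
      (∀ g, g ∉ H → p.1 g = 0) ∧ (∀ n ∈ E j, τ p.1 n = 0) ∧ p.1 1 = p.2 • v := by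
    intro j p
    simp only [hZhatdef, Submodule.mem_inf, Submodule.mem_iInf, LinearMap.mem_ker,
      LinearMap.comp_apply, LinearMap.proj_apply, LinearMap.fst_apply, hZfdef,
      LinearMap.sub_apply, LinearMap.smulRight_apply, LinearMap.snd_apply, sub_eq_zero,
      and_assoc]
    exact Iff.rfl
  have hZ_anti : ∀ {j j' : ℕ}, j ≤ j' → Zhat j' ≤ Zhat j := by
    intro j j' h p hp
    rw [hZmem] at hp ⊢
    exact ⟨hp.1, fun n hn => hp.2.1 n (hE_mono h hn), hp.2.2⟩
  set restr : ∀ k : ℕ, ((G → V) × K) →ₗ[K] ((E k → V) × K) := fun k =>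
    (LinearMap.funLeft K V (fun m : E k => (m : G))).prodMap LinearMap.id with hrestrdef
  have hwit : ∀ j : ℕ, ∃ x : G → V, ((x, (1 : K)) : (G → V) × K) ∈ Zhat j := by
    intro j
    obtain ⟨x₀, hx₀, hx₀1⟩ := hvall (E j)
    refine ⟨fun g => if g ∈ H then x₀ g else 0, (hZmem _ _).mpr ⟨?_, ?_, ?_⟩⟩
    · intro g hg; simp [hg]
    · intro n hn
      have hnH := hE_H j n hn
      have heq : τ (fun g => if g ∈ H then x₀ g else 0) n = τ x₀ n := by
        rw [hμ, hμ]
        congr 1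
        funext m
        have : n * (m : G) ∈ H := mul_mem hnH (hMH m.1 m.2)
        simp [this]
      rw [heq]
      exact hx₀ n hn
    · simp [Subgroup.one_mem, hx₀1]
  have hstabex : ∀ k : ℕ, ∃ j₀, ∀ j, (Zhat j₀).map (restr k) ≤ (Zhat j).map (restr k) := by
    intro k
    set r : ℕ → ℕ := fun j => finrank K ((Zhat j).map (restr k)) with hrdef
    have hne : (Set.range r).Nonempty := ⟨r 0, ⟨0, rfl⟩⟩
    obtain ⟨j₀, hj₀⟩ := Nat.sInf_mem hne
    refine ⟨j₀, fun j => ?_⟩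
    rcases le_total j j₀ with h | h
    · exact Submodule.map_mono (hZ_anti h)
    · have h1 : (Zhat j).map (restr k) ≤ (Zhat j₀).map (restr k) :=
        Submodule.map_mono (hZ_anti h)
      have h2 : r j₀ ≤ r j := by
        rw [hj₀]; exact Nat.sInf_le ⟨j, rfl⟩
      exact le_of_eq (Submodule.eq_of_le_of_finrank_le h1 h2).symm
  choose stab hstab using hstabex
  set ρ : ∀ k : ℕ, ((E (k+1) → V) × K) →ₗ[K] ((E k → V) × K) := fun k =>
    (LinearMap.funLeft K V
      (fun m : E k => (⟨m.1, hE_mono (Nat.le_succ k) m.2⟩ : E (k+1)))).prodMap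
      LinearMap.id with hρdef
  have hρrestr : ∀ k, (ρ k).comp (restr (k+1)) = restr k := by
    intro k
    apply LinearMap.ext
    intro p
    rfl
  have hstep : ∀ (k : ℕ) (p : (E k → V) × K),
      (p ∈ (Zhat (stab k)).map (restr k) ∧ p.2 = 1) →
      ∃ q, ((q ∈ (Zhat (stab (k+1))).map (restr (k+1)) ∧ q.2 = 1) ∧ ρ k q = p) := by
    intro k p hp
    obtain ⟨hp, hp1⟩ := hp
    set j := max (stab k) (stab (k+1)) with hjdef
    have e1 : (Zhat j).map (restr k) = (Zhat (stab k)).map (restr k) :=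
      le_antisymm (Submodule.map_mono (hZ_anti (le_max_left _ _))) (hstab k j)
    have e2 : (Zhat j).map (restr (k+1)) = (Zhat (stab (k+1))).map (restr (k+1)) :=
      le_antisymm (Submodule.map_mono (hZ_anti (le_max_right _ _))) (hstab (k+1) j)
    rw [← e1] at hp
    obtain ⟨z, hz, hzp⟩ := hp
    refine ⟨restr (k+1) z, ⟨?_, ?_⟩, ?_⟩
    · rw [← e2]; exact Submodule.mem_map_of_mem hz
    · have hz2 : z.2 = p.2 := by rw [← hzp]; rfl
      rw [show (restr (k+1) z).2 = z.2 from rfl, hz2, hp1]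
    · rw [show ρ k (restr (k+1) z) = ((ρ k).comp (restr (k+1))) z from rfl, hρrestr k, hzp]
  have h0 : ∃ a : (E 0 → V) × K, a ∈ (Zhat (stab 0)).map (restr 0) ∧ a.2 = 1 := by
    obtain ⟨x₀, hx₀⟩ := hwit (stab 0)
    exact ⟨restr 0 (x₀, 1), Submodule.mem_map_of_mem hx₀, rfl⟩
  set S : ∀ k : ℕ, ((E k → V) × K) → Prop :=
    fun k p => p ∈ (Zhat (stab k)).map (restr k) ∧ p.2 = 1 with hSdef
  set u : ∀ k : ℕ, {a : (E k → V) × K // S k a} :=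
    seqAux S (fun k => ρ k) h0 hstep with hudef
  have hcompat : ∀ k, ρ k (u (k+1)).1 = (u k).1 :=
    fun k => seqAux_compat S (fun k => ρ k) h0 hstep k
  have hucompat : ∀ (k k' : ℕ) (h : k ≤ k') (g : G) (hg : g ∈ E k),
      (u k').1.1 ⟨g, hE_mono h hg⟩ = (u k).1.1 ⟨g, hg⟩ := by
    intro k k' h
    induction h with
    | refl => intro g hg; rfl
    | @step m hm ih =>
      intro g hg
      calc (u (m+1)).1.1 ⟨g, hE_mono (Nat.le_succ_of_le hm) hg⟩
          = (ρ m (u (m+1)).1).1 ⟨g, hE_mono hm hg⟩ := rfl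
        _ = (u m).1.1 ⟨g, hE_mono hm hg⟩ := by rw [hcompat m]
        _ = (u k).1.1 ⟨g, hg⟩ := ih g hg
  set x : G → V := fun g =>
    if hg : g ∈ H then (u (hE_cover g hg).choose).1.1 ⟨g, (hE_cover g hg).choose_spec⟩
    else 0 with hxdef
  have hx_eq : ∀ (k : ℕ) (g : G) (hg : g ∈ E k), x g = (u k).1.1 ⟨g, hg⟩ := by
    intro k g hg
    have hgH : g ∈ H := hE_H k g hg
    have hx' : x g = (u (hE_cover g hgH).choose).1.1 ⟨g, (hE_cover g hgH).choose_spec⟩ := by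
      rw [hxdef]; exact dif_pos hgH
    rw [hx']
    set k₁ := (hE_cover g hgH).choose with hk₁def
    have hgk₁ : g ∈ E k₁ := (hE_cover g hgH).choose_spec
    rcases le_total k k₁ with h | h
    · exact hucompat k k₁ h g hg
    · exact (hucompat k₁ k h g hgk₁).symm
  have hmain : ∀ k : ℕ, ∃ z : (G → V) × K,
      z ∈ Zhat k ∧ (∀ g ∈ E k, z.1 g = x g) ∧ z.2 = 1 := by
    intro k
    have h1 : (u k).1 ∈ (Zhat k).map (restr k) := hstab k k (u k).2.1
    obtain ⟨z, hz, hzr⟩ := h1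
    refine ⟨z, hz, ?_, ?_⟩
    · intro g hg
      have hz1 : z.1 g = (u k).1.1 ⟨g, hg⟩ := by rw [← hzr]; rfl
      rw [hz1, hx_eq k g hg]
    · have hz2 : z.2 = (u k).1.2 := by rw [← hzr]; rfl
      rw [hz2, (u k).2.2]
  have hx1 : x 1 = v := by
    obtain ⟨k, hk⟩ := hE_cover 1 (Subgroup.one_mem H)
    obtain ⟨z, hzZ, hag, hz2⟩ := hmain k
    have h1 := ((hZmem k z).mp hzZ).2.2
    rw [← hag 1 hk, h1, hz2, one_smul]
  have hτx : ∀ g : G, τ x g = 0 := by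
    intro g
    by_cases hgH : g ∈ H
    · obtain ⟨k, hk⟩ := hE_finset (insert g (M.image (g * ·))) (by
        intro s hs
        rcases Finset.mem_insert.mp hs with rfl | hs
        · exact hgH
        · obtain ⟨m, hm, rfl⟩ := Finset.mem_image.mp hs
          exact mul_mem hgH (hMH m hm))
      obtain ⟨z, hzZ, hag, hz2⟩ := hmain k
      have e : τ x g = τ z.1 g := by
        rw [hμ, hμ]
        congr 1
        funext m
        refine (hag (g * m) (hk ?_)).symm
        exact Finset.mem_insert_of_mem (Finset.mem_image.mpr ⟨m.1, m.2, rfl⟩)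
      rw [e]
      exact ((hZmem k z).mp hzZ).2.1 g (hk (Finset.mem_insert_self _ _))
    · have hx0 : ∀ m : M, x (g * m) = 0 := by
        intro m
        have hgm : g * (m : G) ∉ H := by
          intro hmem
          exact hgH (by simpa using mul_mem hmem (inv_mem (hMH m.1 m.2)))
        rw [hxdef]
        exact dif_neg hgm
      have e : τ x g = τ (0 : G → V) g := by
        rw [hμ, hμ]
        congr 1
        funext m
        simp [hx0 m]
      rw [e, show τ (0 : G → V) = 0 from T.map_zero]
      rfl
  have hx_zero : x = 0 := by
    apply hinj
    funext g
    rw [hτx g, show τ (0 : G → V) = 0 from T.map_zero]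
    rfl
  rw [← hx1, hx_zero]
  rfl

/-- `τ` is a cellular automaton over the group `G` and alphabet `A`:
there are a finite memory set `M ⊆ G` and a local defining map
`μ : A^M → A` with `τ(x)(g) = μ((g⁻¹ · x)|_M)`; note `(g⁻¹ · x)(m) = x (g * m)`. -/
def IsCellularAutomaton {G A : Type*} [Group G] (τ : (G → A) → (G → A)) : Prop :=
  ∃ (M : Finset G) (μ : (M → A) → A),
    ∀ (x : G → A) (g : G), τ x g = μ (fun m => x (g * m.val))

theorem bijective_linear_ca_reversible
    {G : Type*} [Group G] {K V : Type*} [Field K]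
    [AddCommGroup V] [Module K V] [FiniteDimensional K V]
    (τ : (G → V) → (G → V)) (hlin : IsLinearMap K τ)
    (hca : IsCellularAutomaton τ) (hbij : Function.Bijective τ) :
    ∃ σ : (G → V) → (G → V), Function.LeftInverse σ τ ∧
      Function.RightInverse σ τ ∧ IsCellularAutomaton σ := by
  classical
  obtain ⟨M, μ, hμ⟩ := hca
  set σ : (G → V) → (G → V) := Function.invFun τ with hσdef
  have hL : Function.LeftInverse σ τ := Function.leftInverse_invFun hbij.1
  have hR : Function.RightInverse σ τ := Function.rightInverse_invFun hbij.2
  have key : ∃ N₀ : Finset G, ∀ x : G → V, (∀ n ∈ N₀, τ x n = 0) → x 1 = 0 :=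
    key_lemma τ hlin M μ hμ hbij.1
  obtain ⟨N₀, hN₀⟩ := key
  refine ⟨σ, hL, hR, N₀, fun u => σ (fun g => if hg : g ∈ N₀ then u ⟨g, hg⟩ else 0) 1, ?_⟩
  have hloc : ∀ y₁ y₂ : G → V, (∀ n ∈ N₀, y₁ n = y₂ n) → σ y₁ 1 = σ y₂ 1 := by
    intro y₁ y₂ h
    have h1 : τ (σ y₁ - σ y₂) = y₁ - y₂ := by
      calc τ (σ y₁ - σ y₂) = τ (σ y₁) - τ (σ y₂) := (hlin.mk' τ).map_sub _ _
        _ = y₁ - y₂ := by rw [hR y₁, hR y₂]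
    have h2 : (σ y₁ - σ y₂) 1 = 0 := by
      refine hN₀ _ (fun n hn => ?_)
      rw [h1]
      simp [h n hn]
    have h3 : σ y₁ 1 - σ y₂ 1 = 0 := h2
    exact sub_eq_zero.mp h3
  have hshiftτ : ∀ (h : G) (x : G → V), τ (fun g => x (h * g)) = fun g => τ x (h * g) := by
    intro h x; funext g
    rw [hμ, hμ]
    congr 1; funext m; rw [mul_assoc]
  have hshiftσ : ∀ (h : G) (y : G → V), σ (fun g => y (h * g)) = fun g => σ y (h * g) := by
    intro h y
    apply hbij.1
    rw [hR, hshiftτ h (σ y), hR]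
  intro y g
  have e1 : σ y g = σ (fun g' => y (g * g')) 1 := by
    rw [hshiftσ g y]; simp
  rw [e1]
  exact hloc _ _ (fun n hn => by simp [hn])
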